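/- If f is an o-polynomial over GF(2^m), then the map x ↦ x·f(x^{2^m-2}) is also an o-polynomial over GF(2^m). -/

import Mathlib

/-- `f` is an o-polynomial over the finite field `F` of characteristic 2. -/
def IsOPoly {F : Type*} [Field F] [Fintype F] (f : F → F) : Prop :=
  Function.Bijective f ∧ f 0 = 0 ∧
    ∀ s : F, Function.Bijective fun x : F =>
      (f (x + s) + f s) * x ^ (Fintype.card F - 2)

/-- if f is an o-polynomial over GF(2^m) then x ↦ x·f(x^{2^m-2}) is too. -/
theorem stmt_5 {F : Type*} [Field F] [Fintype F]
    (m : ℕ) (hcard : Fintype.card F = 2 ^ m)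
    (f : F → F) (hf : IsOPoly f) :
    IsOPoly fun x : F => x * f (x ^ (2 ^ m - 2)) := by
  obtain ⟨hfb, hf0, hfs⟩ := hf
  have hm : m ≠ 0 := by
    rintro rfl
    have := Fintype.one_lt_card (α := F)
    omega
  by_cases hm1 : m = 1
  · subst hm1
    have hcard2 : Fintype.card F = 2 := by simpa using hcard
    have hx01 : ∀ x : F, x = 0 ∨ x = 1 := by
      intro x
      rcases eq_or_ne x 0 with h | h
      · exact Or.inl h
      · right
        have := FiniteField.pow_card_sub_one_eq_one x h
        rw [hcard2] at this
        simpa using this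
    have hf1 : f 1 = 1 := by
      rcases hx01 (f 1) with h | h
      · exact absurd (hfb.injective (h.trans hf0.symm)) one_ne_zero
      · exact h
    have heq : (fun x : F => x * f (x ^ (2 ^ 1 - 2))) = f := by
      funext x
      rcases hx01 x with rfl | rfl
      · simp [hf0]
      · simp [hf1]
    rw [heq]
    exact ⟨hfb, hf0, hfs⟩
  · -- main case m ≥ 2
    have hq3 : 3 ≤ 2 ^ m := by
      have h2m : 2 ≤ m := by omega
      calc 3 ≤ 2 ^ 2 := by norm_num
        _ ≤ 2 ^ m := Nat.pow_le_pow_right (by norm_num) h2m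
    have hpow : ∀ x : F, x ^ (2 ^ m - 2) = x⁻¹ := by
      intro x
      rcases eq_or_ne x 0 with rfl | hx
      · rw [zero_pow (by omega), inv_zero]
      · have h1 : x ^ (2 ^ m - 1) = 1 := by
          rw [← hcard]; exact FiniteField.pow_card_sub_one_eq_one x hx
        have hmul : x ^ (2 ^ m - 2) * x = 1 := by
          rw [← pow_succ]
          have he : 2 ^ m - 2 + 1 = 2 ^ m - 1 := by omega
          rw [he, h1]
        exact eq_inv_of_mul_eq_one_left hmul
    have h2 : (2 : F) = 0 := by
      have hc : ((Fintype.card F : ℕ) : F) = 0 := FiniteField.cast_card_eq_zero F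
      rw [hcard] at hc
      push_cast at hc
      exact (pow_eq_zero_iff hm).mp hc
    have haa : ∀ a : F, a + a = 0 := by
      intro a; rw [← two_mul, h2, zero_mul]
    have hab : ∀ a b : F, a + b = 0 ↔ a = b := by
      intro a b
      constructor
      · intro h; exact add_right_cancel (h.trans (haa b).symm)
      · rintro rfl; exact haa a
    simp only [hcard, hpow] at hfs
    unfold IsOPoly
    simp only [hcard, hpow]
    have hh : Function.Bijective fun y : F => f y * y⁻¹ := by
      simpa [hf0] using hfs 0
    have hgb : Function.Bijective fun x : F => x * f x⁻¹ := by
      have hc := hh.comp (inv_involutive : Function.Involutive (Inv.inv : F → F)).bijective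
      convert hc using 1
      funext x
      simp [Function.comp, mul_comm]
    refine ⟨hgb, by simp, ?_⟩
    intro s
    rcases eq_or_ne s 0 with rfl | hs
    · have heq : (fun x : F => ((x + 0) * f (x + 0)⁻¹ + 0 * f 0⁻¹) * x⁻¹)
          = fun x : F => f x⁻¹ := by
        funext x
        rcases eq_or_ne x 0 with rfl | hx
        · simp [hf0]
        · field_simp
          simp
      rw [heq]
      exact hfb.comp (inv_involutive : Function.Involutive (Inv.inv : F → F)).bijective
    · refine Finite.injective_iff_bijective.mp ?_
      have hginj := hgb.injective
      have hphi := hfs s⁻¹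
      have hsi : (s : F)⁻¹ ≠ 0 := inv_ne_zero hs
      -- key identity
      have key : ∀ x : F, x ≠ 0 → x + s ≠ 0 →
          ((x + s) * f (x + s)⁻¹ + s * f s⁻¹) * x⁻¹
            = ((f (x * (s * (x + s))⁻¹ + s⁻¹) + f s⁻¹) * (x * (s * (x + s))⁻¹)⁻¹) * s⁻¹
              + f s⁻¹ := by
        intro x hx hxs
        have hy : x * (s * (x + s))⁻¹ + s⁻¹ = (x + s)⁻¹ := by
          field_simp
          linear_combination x * h2
        rw [hy]
        set A := f (x + s)⁻¹ with hA
        set B := f s⁻¹ with hB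
        field_simp
        linear_combination (-(x * B)) * h2
      -- value lemmas
      have hzero : ∀ x : F, ((x + s) * f (x + s)⁻¹ + s * f s⁻¹) * x⁻¹ = 0 → x = 0 := by
        intro x hx0
        by_contra hx
        have hbr : (x + s) * f (x + s)⁻¹ + s * f s⁻¹ = 0 := by
          have := mul_eq_zero.mp hx0
          rcases this with h | h
          · exact h
          · exact absurd h (inv_ne_zero hx)
        have : x + s = s := hginj ((hab _ _).mp hbr)
        exact hx (by linear_combination this)
      have hpsis : ((s + s) * f (s + s)⁻¹ + s * f s⁻¹) * s⁻¹ = f s⁻¹ := by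
        rw [haa s]
        field_simp
        simp
      have hft : ∀ x : F, ((x + s) * f (x + s)⁻¹ + s * f s⁻¹) * x⁻¹ = f s⁻¹ → x = s := by
        intro x hx0
        rcases eq_or_ne x 0 with rfl | hx
        · exfalso
          simp only [inv_zero, mul_zero] at hx0
          exact hsi (hfb.injective (by rw [hf0, ← hx0]))
        rcases eq_or_ne x s with rfl | hxs'
        · rfl
        · exfalso
          have hxs : x + s ≠ 0 := fun h => hxs' ((hab _ _).mp h)
          rw [key x hx hxs] at hx0
          have h0 : (f (x * (s * (x + s))⁻¹ + s⁻¹) + f s⁻¹) * (x * (s * (x + s))⁻¹)⁻¹ * s⁻¹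
              = 0 := by linear_combination hx0
          have h1 : (f (x * (s * (x + s))⁻¹ + s⁻¹) + f s⁻¹) * (x * (s * (x + s))⁻¹)⁻¹ = 0 := by
            rcases mul_eq_zero.mp h0 with h | h
            · exact h
            · exact absurd h hsi
          have hM : x * (s * (x + s))⁻¹ ≠ 0 :=
            mul_ne_zero hx (inv_ne_zero (mul_ne_zero hs hxs))
          refine hM (hphi.injective ?_)
          show (f (x * (s * (x + s))⁻¹ + s⁻¹) + f s⁻¹) * (x * (s * (x + s))⁻¹)⁻¹
              = (f ((0 : F) + s⁻¹) + f s⁻¹) * (0 : F)⁻¹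
          rw [h1]
          simp
      intro x1 x2 hx12
      simp only at hx12
      rcases eq_or_ne x1 0 with rfl | h1
      · exact (hzero x2 (by rw [← hx12]; simp)).symm
      rcases eq_or_ne x2 0 with rfl | h2'
      · exact hzero x1 (by rw [hx12]; simp)
      rcases eq_or_ne x1 s with rfl | h1s
      · exact (hft x2 (by rw [← hx12, hpsis])).symm
      rcases eq_or_ne x2 s with rfl | h2s
      · exact hft x1 (by rw [hx12, hpsis])
      · have hx1s : x1 + s ≠ 0 := fun h => h1s ((hab _ _).mp h)
        have hx2s : x2 + s ≠ 0 := fun h => h2s ((hab _ _).mp h)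
        rw [key x1 h1 hx1s, key x2 h2' hx2s] at hx12
        have hc1 : (f (x1 * (s * (x1 + s))⁻¹ + s⁻¹) + f s⁻¹) * (x1 * (s * (x1 + s))⁻¹)⁻¹
            = (f (x2 * (s * (x2 + s))⁻¹ + s⁻¹) + f s⁻¹) * (x2 * (s * (x2 + s))⁻¹)⁻¹ :=
          mul_right_cancel₀ hsi (add_right_cancel hx12)
        have hM : x1 * (s * (x1 + s))⁻¹ = x2 * (s * (x2 + s))⁻¹ := hphi.injective hc1
        have h4 : x1 * (s * (x2 + s)) = x2 * (s * (x1 + s)) := by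
          field_simp at hM
          linear_combination s * hM
        have h5 : x1 * (s * s) = x2 * (s * s) := by linear_combination h4
        exact mul_right_cancel₀ (mul_ne_zero hs hs) h5
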